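/- Let E₀ < E₁ < ⋯ < E_{2n+1} be real numbers, Σ = ⋃_{ℓ=0}^{n}[E_{2ℓ},E_{2ℓ+1}], R(z) = ∏_{m=0}^{2n+1}(z-E_m), and let P_n(z) = ∏_{j=1}^n(z-a_j) be monic of degree n with a_j ∈ [E_{2j-1},E_{2j}]. Then the function z ↦ P_n(z)/R(z)^{1/2} (with the standard branch, analytic on ℂ∖Σ) maps the open upper half-plane into the closed upper half-plane, i.e., it is a Herglotz function. -/

import Mathlib

open Finset
open Topology



private lemma pairSum (f : ℕ → ℝ) (n : ℕ) :
    ∑ m ∈ Finset.range (2 * n + 2), f m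
      = ∑ j ∈ Finset.range (n + 1), (f (2 * j) + f (2 * j + 1)) := by
  induction n with
  | zero => simp [Finset.sum_range_succ]
  | succ n ih =>
      have h : 2 * (n + 1) + 2 = (2 * n + 2) + 1 + 1 := by ring
      rw [h, Finset.sum_range_succ, Finset.sum_range_succ, ih, Finset.sum_range_succ]
      have e1 : 2 * (n + 1) = 2 * n + 2 := by ring
      have e2 : 2 * (n + 1) + 1 = 2 * n + 2 + 1 := by ring
      conv_rhs => rw [Finset.sum_range_succ]
      rw [e1]
      have e3 : 2 * n + 2 + 1 = 2 * n + 3 := by omega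
      rw [e3]
      conv_rhs => rw [Finset.sum_range_succ]
      ring

private lemma ratioMono {b t₁ t₂ : ℝ} (hb : b ≠ 0) (h : t₁ ≤ t₂) :
    t₁ / Real.sqrt (t₁ ^ 2 + b ^ 2) ≤ t₂ / Real.sqrt (t₂ ^ 2 + b ^ 2) := by
  have hb2 : 0 < b ^ 2 := by positivity
  have h₁ : 0 < Real.sqrt (t₁ ^ 2 + b ^ 2) := Real.sqrt_pos.2 (by positivity)
  have h₂ : 0 < Real.sqrt (t₂ ^ 2 + b ^ 2) := Real.sqrt_pos.2 (by positivity)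
  have e₁ : Real.sqrt (t₁ ^ 2 + b ^ 2) ^ 2 = t₁ ^ 2 + b ^ 2 := Real.sq_sqrt (by positivity)
  have e₂ : Real.sqrt (t₂ ^ 2 + b ^ 2) ^ 2 = t₂ ^ 2 + b ^ 2 := Real.sq_sqrt (by positivity)
  rw [div_le_div_iff₀ h₁ h₂]
  rcases le_or_gt 0 t₁ with h0 | h0
  · have ht₂ : 0 ≤ t₂ := le_trans h0 h
    have ht : t₁ ^ 2 ≤ t₂ ^ 2 := by nlinarith [mul_self_le_mul_self h0 h]
    have hsq : (t₁ * Real.sqrt (t₂ ^ 2 + b ^ 2)) ^ 2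
        ≤ (t₂ * Real.sqrt (t₁ ^ 2 + b ^ 2)) ^ 2 := by
      rw [mul_pow, mul_pow, e₁, e₂]
      nlinarith [mul_le_mul_of_nonneg_left ht (sq_nonneg b)]
    have h5 := Real.sqrt_le_sqrt hsq
    rwa [Real.sqrt_sq (mul_nonneg h0 h₂.le), Real.sqrt_sq (mul_nonneg ht₂ h₁.le)] at h5
  · rcases le_or_gt 0 t₂ with h0' | h0'
    · have : t₁ * Real.sqrt (t₂ ^ 2 + b ^ 2) ≤ 0 :=
        mul_nonpos_of_nonpos_of_nonneg h0.le h₂.le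
      have h2 : 0 ≤ t₂ * Real.sqrt (t₁ ^ 2 + b ^ 2) := mul_nonneg h0' h₁.le
      linarith
    · have ht : t₂ ^ 2 ≤ t₁ ^ 2 := by nlinarith [mul_self_le_mul_self (neg_nonneg.2 h0'.le) (by linarith : -t₂ ≤ -t₁)]
      have hsq : (-t₂ * Real.sqrt (t₁ ^ 2 + b ^ 2)) ^ 2
          ≤ (-t₁ * Real.sqrt (t₂ ^ 2 + b ^ 2)) ^ 2 := by
        rw [mul_pow, mul_pow, e₁, e₂]
        nlinarith [mul_le_mul_of_nonneg_left ht (sq_nonneg b)]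
      have h5 := Real.sqrt_le_sqrt hsq
      rw [Real.sqrt_sq (mul_nonneg (neg_nonneg.2 h0'.le) h₁.le),
        Real.sqrt_sq (mul_nonneg (neg_nonneg.2 h0.le) h₂.le)] at h5
      linarith

private lemma argBounds {w : ℂ} (hw : 0 < w.im) : 0 < w.arg ∧ w.arg < Real.pi := by
  have hwne : w ≠ 0 := fun h => by simp [h] at hw
  have habs : 0 < ‖w‖ := norm_pos_iff.mpr hwne
  have hlt : |w.re| < ‖w‖ := Complex.abs_re_lt_norm.2 (ne_of_gt hw)
  rw [Complex.arg_of_im_pos hw]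
  constructor
  · exact Real.arccos_pos.2 (by rw [div_lt_one habs]; exact lt_of_le_of_lt (le_abs_self _) hlt)
  · refine lt_of_le_of_ne (Real.arccos_le_pi _) (fun hc => ?_)
    have := Real.arccos_eq_pi.mp hc
    have h2 : -1 < w.re / ‖w‖ := by
      rw [lt_div_iff₀ habs]
      have := neg_abs_le w.re
      linarith
    linarith

private lemma argSubMono {z : ℂ} (hz : 0 < z.im) {x y : ℝ} (hxy : x ≤ y) :
    (z - (x : ℂ)).arg ≤ (z - (y : ℂ)).arg := by
  have hx : 0 < (z - (x : ℂ)).im := by simpa using hz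
  have hy : 0 < (z - (y : ℂ)).im := by simpa using hz
  rw [Complex.arg_of_im_pos hx, Complex.arg_of_im_pos hy]
  have habs : ∀ t : ℝ, ‖z - (t : ℂ)‖ = Real.sqrt ((z.re - t) ^ 2 + z.im ^ 2) := by
    intro t
    rw [Complex.norm_def, Complex.normSq_apply]
    congr 1
    simp
    ring
  have hre : ∀ t : ℝ, (z - (t : ℂ)).re = z.re - t := by intro t; simp
  rw [habs, habs, hre, hre,
    Real.arccos_eq_pi_div_two_sub_arcsin, Real.arccos_eq_pi_div_two_sub_arcsin]
  have : z.re - y ≤ z.re - x := by linarith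
  exact sub_le_sub_left (Real.monotone_arcsin (ratioMono (ne_of_gt hz) this)) _

/-- Lemma 5.3 (i), Herglotz property: with `Σ = ⋃ℓ [E_{2ℓ}, E_{2ℓ+1}]` and the branch
`R^{1/2}` analytic on `ℂ∖Σ` with `(R^{1/2})² = R` and `R^{1/2}(λ) < 0` for real
`λ > E_{2n+1}`, the function `P_n/R^{1/2}` with `P_n(z) = ∏ (z - a_j)`,
`a_j ∈ [E_{2j-1}, E_{2j}]`, maps the open upper half-plane into the closed upper
half-plane. -/
theorem Pn_over_Rhalf_is_Herglotz
    (n : ℕ) (E : ℕ → ℝ) (hE : ∀ m, m < 2 * n + 1 → E m < E (m + 1))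
    (a : ℕ → ℝ) (ha : ∀ j, 1 ≤ j → j ≤ n → a j ∈ Set.Icc (E (2 * j - 1)) (E (2 * j)))
    (Sigma : Set ℂ)
    (hSigma : Sigma = {z : ℂ | z.im = 0 ∧ ∃ ℓ ≤ n, z.re ∈ Set.Icc (E (2 * ℓ)) (E (2 * ℓ + 1))})
    (Rhalf : ℂ → ℂ)
    (hRhalf_analytic : DifferentiableOn ℂ Rhalf Sigmaᶜ)
    (hRhalf_sq : ∀ z ∈ Sigmaᶜ, Rhalf z ^ 2 = ∏ m ∈ Finset.range (2 * n + 2), (z - (E m : ℂ)))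
    (hRhalf_normalization : ∀ lam : ℝ, E (2 * n + 1) < lam →
      (Rhalf lam).im = 0 ∧ (Rhalf lam).re < 0) :
    ∀ z : ℂ, 0 < z.im →
      0 ≤ ((∏ j ∈ Finset.Icc 1 n, (z - (a j : ℂ))) / Rhalf z).im := by
  classical
  -- monotonicity of E
  have hmono : ∀ j, j ≤ 2 * n + 1 → ∀ i, i ≤ j → E i ≤ E j := by
    intro j
    induction j with
    | zero =>
        intro _ i hi
        have : i = 0 := by omega
        simp [this]
    | succ k ih =>
        intro hk i hi
        rcases Nat.lt_succ_iff_lt_or_eq.mp (Nat.lt_succ_of_le hi) with h | h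
        · exact le_trans (ih (by omega) i (by omega)) (le_of_lt (hE k (by omega)))
        · simp [h]
  -- the upper half plane
  set U : Set ℂ := {w : ℂ | 0 < w.im} with hU
  have hUopen : IsOpen U := isOpen_lt continuous_const Complex.continuous_im
  have hUsub : U ⊆ Sigmaᶜ := by
    intro w hw
    simp only [Set.mem_compl_iff, hSigma, Set.mem_setOf_eq, not_and]
    intro h0
    exact absurd h0 (ne_of_gt hw)
  -- the explicit branch g
  set lam0 : ℝ := E (2 * n + 1) + 1 with hlam0
  set g : ℂ → ℂ := fun w =>
    -Complex.exp ((∑ m ∈ Finset.range (2 * n + 2), Complex.log (w - (E m : ℂ))) / 2) with hg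
  have hgne : ∀ w, g w ≠ 0 := fun w => neg_ne_zero.2 (Complex.exp_ne_zero _)
  have hfacne : ∀ w : ℂ, 0 < w.im → ∀ m : ℕ, w - (E m : ℂ) ≠ 0 := by
    intro w hw m h
    have h2 : (w - (E m : ℂ)).im = w.im := by simp
    rw [h] at h2
    simp at h2
    exact absurd h2.symm (ne_of_gt hw)
  have hgsq : ∀ w : ℂ, (∀ m ∈ Finset.range (2 * n + 2), w - (E m : ℂ) ≠ 0) →
      g w ^ 2 = ∏ m ∈ Finset.range (2 * n + 2), (w - (E m : ℂ)) := by
    intro w hw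
    have h1 : g w ^ 2 = Complex.exp
        ((∑ m ∈ Finset.range (2 * n + 2), Complex.log (w - (E m : ℂ))) / 2) ^ 2 := by
      rw [hg]; ring
    rw [h1, ← Complex.exp_nat_mul]
    have h2 : ((2 : ℕ) : ℂ) *
        ((∑ m ∈ Finset.range (2 * n + 2), Complex.log (w - (E m : ℂ))) / 2)
        = ∑ m ∈ Finset.range (2 * n + 2), Complex.log (w - (E m : ℂ)) := by
      push_cast; ring
    rw [h2, Complex.exp_sum]
    exact Finset.prod_congr rfl fun m hm => Complex.exp_log (hw m hm)
  have hgc : ∀ w : ℂ, (∀ m ∈ Finset.range (2 * n + 2), w - (E m : ℂ) ∈ Complex.slitPlane) →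
      ContinuousAt g w := by
    intro w hw
    have hsum : ContinuousAt
        (fun w => ∑ m ∈ Finset.range (2 * n + 2), Complex.log (w - (E m : ℂ))) w := by
      apply tendsto_finset_sum
      intro m hm
      exact ContinuousAt.clog (continuousAt_id.sub continuousAt_const) (hw m hm)
    rw [hg]
    exact ((hsum.div_const 2).cexp).neg
  -- lam0 is in the complement of Sigma
  have hlamc : ((lam0 : ℝ) : ℂ) ∈ Sigmaᶜ := by
    simp only [Set.mem_compl_iff, hSigma, Set.mem_setOf_eq, not_and]
    rintro - ⟨ℓ, hℓ, hmem⟩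
    have h1 : E (2 * ℓ + 1) ≤ E (2 * n + 1) := hmono (2 * n + 1) le_rfl _ (by omega)
    have h2 := hmem.2
    rw [Complex.ofReal_re] at h2
    rw [hlam0] at h2
    linarith
  have hlampos : ∀ m ∈ Finset.range (2 * n + 2), 0 < lam0 - E m := by
    intro m hm
    rw [Finset.mem_range] at hm
    have := hmono (2 * n + 1) le_rfl m (by omega)
    rw [hlam0]; linarith
  -- value of g at lam0
  set r : ℝ := ∑ m ∈ Finset.range (2 * n + 2), Real.log (lam0 - E m) with hr
  have hglam : g ((lam0 : ℝ) : ℂ) = ((-Real.exp (r / 2) : ℝ) : ℂ) := by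
    have h1 : ∀ m ∈ Finset.range (2 * n + 2),
        Complex.log (((lam0 : ℝ) : ℂ) - (E m : ℂ)) = ((Real.log (lam0 - E m) : ℝ) : ℂ) := by
      intro m hm
      have hp := hlampos m hm
      rw [show ((lam0 : ℝ) : ℂ) - (E m : ℂ) = ((lam0 - E m : ℝ) : ℂ) by push_cast; ring]
      exact (Complex.ofReal_log hp.le).symm
    have h2 : ∑ m ∈ Finset.range (2 * n + 2), Complex.log (((lam0 : ℝ) : ℂ) - (E m : ℂ))
        = ((r : ℝ) : ℂ) := by
      rw [Finset.sum_congr rfl h1, hr]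
      push_cast
      ring
    rw [hg]
    simp only
    rw [h2]
    push_cast
    ring
  -- Rhalf agrees with g at lam0
  have hRlam : Rhalf ((lam0 : ℝ) : ℂ) = g ((lam0 : ℝ) : ℂ) := by
    obtain ⟨him, hre⟩ := hRhalf_normalization lam0 (by rw [hlam0]; linarith)
    have heq : Rhalf ((lam0 : ℝ) : ℂ) ^ 2 = g ((lam0 : ℝ) : ℂ) ^ 2 := by
      rw [hRhalf_sq _ hlamc, hgsq _ (fun m hm => by
        have := hlampos m hm
        rw [show ((lam0 : ℝ) : ℂ) - (E m : ℂ) = ((lam0 - E m : ℝ) : ℂ) by push_cast; ring]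
        exact Complex.ofReal_ne_zero.mpr (ne_of_gt this))]
    rcases sq_eq_sq_iff_eq_or_eq_neg.mp heq with h | h
    · exact h
    · exfalso
      have h3 : Rhalf ((lam0 : ℝ) : ℂ) = ((Real.exp (r / 2) : ℝ) : ℂ) := by
        rw [h, hglam]; push_cast; ring
      rw [h3, Complex.ofReal_re] at hre
      linarith [Real.exp_pos (r / 2)]
  -- slit plane membership for points of U and for lam0
  have hslitU : ∀ w : ℂ, 0 < w.im → ∀ m ∈ Finset.range (2 * n + 2),
      w - (E m : ℂ) ∈ Complex.slitPlane := by
    intro w hw m _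
    refine Complex.mem_slitPlane_iff.2 (Or.inr ?_)
    simp only [Complex.sub_im, Complex.ofReal_im, sub_zero]
    exact ne_of_gt hw
  have hslitlam : ∀ m ∈ Finset.range (2 * n + 2),
      ((lam0 : ℝ) : ℂ) - (E m : ℂ) ∈ Complex.slitPlane := by
    intro m hm
    refine Complex.mem_slitPlane_iff.2 (Or.inl ?_)
    simp only [Complex.sub_re, Complex.ofReal_re]
    exact hlampos m hm
  -- the key identity : Rhalf = g on U
  have hkey : ∀ w ∈ U, Rhalf w = g w := by
    have hRcont : ContinuousOn Rhalf Sigmaᶜ := hRhalf_analytic.continuousOn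
    have hgcU : ContinuousOn g U := fun w hw =>
      (hgc w (hslitU w hw)).continuousWithinAt
    have hsqU : ∀ w ∈ U, Rhalf w ^ 2 = g w ^ 2 := by
      intro w hw
      rw [hRhalf_sq w (hUsub hw), hgsq w (fun m _ => hfacne w hw m)]
    set u : Set ℂ := U ∩ (fun w => Rhalf w + g w) ⁻¹' {(0 : ℂ)}ᶜ with hu
    set v : Set ℂ := U ∩ (fun w => Rhalf w - g w) ⁻¹' {(0 : ℂ)}ᶜ with hv
    have huo : IsOpen u :=
      ((hRcont.mono hUsub).add hgcU).isOpen_inter_preimage hUopen isOpen_compl_singleton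
    have hvo : IsOpen v :=
      ((hRcont.mono hUsub).sub hgcU).isOpen_inter_preimage hUopen isOpen_compl_singleton
    have hsub2 : U ⊆ u ∪ v := by
      intro w hw
      by_cases hcase : Rhalf w + g w = 0
      · right
        refine ⟨hw, ?_⟩
        simp only [Set.mem_preimage, Set.mem_compl_iff, Set.mem_singleton_iff]
        intro h2
        have : (2 : ℂ) * g w = 0 := by linear_combination hcase - h2
        simp [hgne w] at this
      · left
        exact ⟨hw, by simpa using hcase⟩
    have hdisj : Disjoint u v := by
      rw [Set.disjoint_left]
      rintro w ⟨hwU, hw1⟩ ⟨-, hw2⟩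
      simp only [Set.mem_preimage, Set.mem_compl_iff, Set.mem_singleton_iff] at hw1 hw2
      rcases sq_eq_sq_iff_eq_or_eq_neg.mp (hsqU w hwU) with h | h
      · exact hw2 (by rw [h]; ring)
      · exact hw1 (by rw [h]; ring)
    -- a point of U near lam0 lies in u
    have hne : (U ∩ u).Nonempty := by
      set seq : ℕ → ℂ := fun k => ((lam0 : ℝ) : ℂ) + ((1 / ((k : ℝ) + 1) : ℝ) : ℂ) * Complex.I
        with hseqdef
      have hseqU : ∀ k, seq k ∈ U := by
        intro k
        have : (seq k).im = 1 / ((k : ℝ) + 1) := by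
          rw [hseqdef]
          simp only [Complex.add_im, Complex.ofReal_im, Complex.mul_im, Complex.I_im,
            Complex.I_re, Complex.ofReal_re, mul_one, mul_zero, add_zero, zero_add]
        show 0 < (seq k).im
        rw [this]
        positivity
      have hseq : Filter.Tendsto seq Filter.atTop (𝓝 ((lam0 : ℝ) : ℂ)) := by
        have h0 : Filter.Tendsto (fun k : ℕ => (1 / ((k : ℝ) + 1))) Filter.atTop (𝓝 0) :=
          tendsto_one_div_add_atTop_nhds_zero_nat
        have h1 := (Complex.continuous_ofReal.tendsto 0).comp h0
        have h2 := h1.mul_const Complex.I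
        have h3 := (tendsto_const_nhds (x := ((lam0 : ℝ) : ℂ))).add h2
        simpa [hseqdef] using h3
      have hwithin : Filter.Tendsto seq Filter.atTop (𝓝[Sigmaᶜ] ((lam0 : ℝ) : ℂ)) := by
        rw [tendsto_nhdsWithin_iff]
        exact ⟨hseq, Filter.Eventually.of_forall fun k => hUsub (hseqU k)⟩
      have hFcont : ContinuousWithinAt (fun w => Rhalf w + g w) Sigmaᶜ ((lam0 : ℝ) : ℂ) :=
        (hRcont _ hlamc).add (hgc _ hslitlam).continuousWithinAt
      have hlim : Filter.Tendsto (fun k => Rhalf (seq k) + g (seq k)) Filter.atTop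
          (𝓝 (Rhalf ((lam0 : ℝ) : ℂ) + g ((lam0 : ℝ) : ℂ))) := hFcont.tendsto.comp hwithin
      have hne0 : Rhalf ((lam0 : ℝ) : ℂ) + g ((lam0 : ℝ) : ℂ) ≠ 0 := by
        rw [hRlam, hglam]
        intro hcontra
        rw [← Complex.ofReal_add, Complex.ofReal_eq_zero] at hcontra
        linarith [Real.exp_pos (r / 2)]
      obtain ⟨k, hk⟩ := (hlim.eventually_ne hne0).exists
      exact ⟨seq k, hseqU k, hseqU k, by simpa using hk⟩
    have hpre : IsPreconnected U := (convex_halfSpace_im_gt (0 : ℝ)).isPreconnected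
    have hsubu : U ⊆ u := hpre.subset_left_of_subset_union huo hvo hdisj hsub2 hne
    intro w hw
    have hwu := hsubu hw
    simp only [hu, Set.mem_inter_iff, Set.mem_preimage, Set.mem_compl_iff,
      Set.mem_singleton_iff] at hwu
    rcases sq_eq_sq_iff_eq_or_eq_neg.mp (hsqU w hw) with h | h
    · exact h
    · exact absurd (by rw [h]; ring) hwu.2
  -- main computation
  intro z hz
  have hRz : Rhalf z = g z := hkey z hz
  have hane : ∀ j : ℕ, z - (a j : ℂ) ≠ 0 := by
    intro j h
    have h2 : (z - (a j : ℂ)).im = z.im := by simp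
    rw [h] at h2
    simp at h2
    exact absurd h2.symm (ne_of_gt hz)
  set Q : ℂ := ∑ j ∈ Finset.Icc 1 n, Complex.log (z - (a j : ℂ)) with hQ
  set s : ℂ := ∑ m ∈ Finset.range (2 * n + 2), Complex.log (z - (E m : ℂ)) with hs
  have hP : ∏ j ∈ Finset.Icc 1 n, (z - (a j : ℂ)) = Complex.exp Q := by
    rw [hQ, Complex.exp_sum]
    exact Finset.prod_congr rfl fun j _ => (Complex.exp_log (hane j)).symm
  have hgz : g z = -Complex.exp (s / 2) := rfl
  have hdiv : (∏ j ∈ Finset.Icc 1 n, (z - (a j : ℂ))) / Rhalf z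
      = -Complex.exp (Q - s / 2) := by
    rw [hP, hRz, hgz, div_neg, ← Complex.exp_sub]
  set φ : ℕ → ℝ := fun m => (z - (E m : ℂ)).arg with hφ
  set α : ℕ → ℝ := fun j => (z - (a j : ℂ)).arg with hα
  have him : (Q - s / 2).im
      = (∑ j ∈ Finset.Icc 1 n, α j) - (∑ m ∈ Finset.range (2 * n + 2), φ m) / 2 := by
    have hsdiv : (s / 2).im = s.im / 2 := by
      rw [show (2 : ℂ) = ((2 : ℝ) : ℂ) from by norm_num, Complex.div_ofReal_im]
    rw [Complex.sub_im, hsdiv]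
    congr 1
    · rw [hQ, Complex.im_sum]
      exact Finset.sum_congr rfl fun j _ => Complex.log_im _
    · rw [hs, Complex.im_sum]
      congr 1
      exact Finset.sum_congr rfl fun m _ => Complex.log_im _
  have hφb : ∀ m : ℕ, 0 < φ m ∧ φ m < Real.pi := by
    intro m
    exact argBounds (by simpa using hz)
  have hm2 : ∀ x y : ℝ, x ≤ y → (z - (x : ℂ)).arg ≤ (z - (y : ℂ)).arg :=
    fun x y h => argSubMono hz h
  have hTpair : ∑ m ∈ Finset.range (2 * n + 2), φ m
      = ∑ j ∈ Finset.range (n + 1), (φ (2 * j) + φ (2 * j + 1)) := pairSum φ n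
  set A := ∑ j ∈ Finset.range n, φ (2 * j + 2) with hA
  set B := ∑ j ∈ Finset.range n, φ (2 * j + 3) with hB
  set C := ∑ j ∈ Finset.range n, φ (2 * j + 1) with hC
  set D := ∑ j ∈ Finset.range n, φ (2 * j) with hD
  have hT1 : ∑ j ∈ Finset.range (n + 1), (φ (2 * j) + φ (2 * j + 1))
      = (φ 0 + φ 1) + (A + B) := by
    rw [Finset.sum_range_succ']
    have hcg : ∀ i ∈ Finset.range n, φ (2 * (i + 1)) + φ (2 * (i + 1) + 1)
        = φ (2 * i + 2) + φ (2 * i + 3) := by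
      intro i _
      have e1 : 2 * (i + 1) = 2 * i + 2 := by ring
      have e2 : 2 * i + 2 + 1 = 2 * i + 3 := by omega
      rw [e1, e2]
    rw [Finset.sum_congr rfl hcg, Finset.sum_add_distrib, hA, hB]
    norm_num
    ring
  have hT2 : ∑ j ∈ Finset.range (n + 1), (φ (2 * j) + φ (2 * j + 1))
      = (D + C) + (φ (2 * n) + φ (2 * n + 1)) := by
    rw [Finset.sum_range_succ, Finset.sum_add_distrib, hD, hC]
  have hSico : ∑ j ∈ Finset.Icc 1 n, α j = ∑ i ∈ Finset.range n, α (i + 1) := by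
    rw [show Finset.Icc 1 n = Finset.Ico 1 (n + 1) from by rw [Finset.Ico_add_one_right_eq_Icc],
      Finset.sum_Ico_eq_sum_range]
    have : n + 1 - 1 = n := by omega
    rw [this]
    exact Finset.sum_congr rfl fun i _ => by rw [add_comm]
  have hSA : ∑ i ∈ Finset.range n, α (i + 1) ≤ A := by
    rw [hA]
    apply Finset.sum_le_sum
    intro i hi
    rw [Finset.mem_range] at hi
    have hj := ha (i + 1) (by omega) (by omega)
    have h1 : a (i + 1) ≤ E (2 * i + 2) := by
      have h2 := hj.2
      rwa [show 2 * (i + 1) = 2 * i + 2 from by ring] at h2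
    simp only [hα, hφ]
    exact hm2 _ _ h1
  have hCS : C ≤ ∑ i ∈ Finset.range n, α (i + 1) := by
    rw [hC]
    apply Finset.sum_le_sum
    intro i hi
    rw [Finset.mem_range] at hi
    have hj := ha (i + 1) (by omega) (by omega)
    have h1 : E (2 * i + 1) ≤ a (i + 1) := by
      have h2 := hj.1
      rwa [show 2 * (i + 1) - 1 = 2 * i + 1 from by omega] at h2
    simp only [hα, hφ]
    exact hm2 _ _ h1
  have hAB : A ≤ B := by
    rw [hA, hB]
    apply Finset.sum_le_sum
    intro i hi
    rw [Finset.mem_range] at hi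
    simp only [hφ]
    exact hm2 _ _ (le_of_lt (by
      have := hE (2 * i + 2) (by omega)
      rwa [show 2 * i + 2 + 1 = 2 * i + 3 from by omega] at this))
  have hDC : D ≤ C := by
    rw [hD, hC]
    apply Finset.sum_le_sum
    intro i hi
    rw [Finset.mem_range] at hi
    simp only [hφ]
    exact hm2 _ _ (le_of_lt (hE (2 * i) (by omega)))
  have hsinle : Real.sin ((∑ j ∈ Finset.Icc 1 n, α j)
      - (∑ m ∈ Finset.range (2 * n + 2), φ m) / 2) ≤ 0 := by
    apply le_of_lt
    apply Real.sin_neg_of_neg_of_neg_pi_lt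
    · rw [hTpair, hT1, hSico]
      have h0 := (hφb 0).1
      have h1 := (hφb 1).1
      linarith [hSA, hAB]
    · rw [hTpair, hT2, hSico]
      have h2n := (hφb (2 * n)).2
      have h2n1 := (hφb (2 * n + 1)).2
      have hpi := Real.pi_pos
      linarith [hCS, hDC]
  rw [hdiv, Complex.neg_im, Complex.exp_im, neg_nonneg, him]
  exact mul_nonpos_of_nonneg_of_nonpos (Real.exp_pos _).le hsinle
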